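/- Let G be a finite simple graph on vertex set V and let i ≥ 0 be an integer. Then Σ over subsets S ⊆ V with |S| = i+2 of ι(Ḡ[S]) = Σ_{v ∈ V} C(deg v, i+1), where ι(Ḡ[S]) denotes the number of isolated vertices of the complement Ḡ[S] of the induced subgraph G[S]. -/

import Mathlib

open Finset

/-- The number of isolated vertices of a graph. -/
noncomputable def numIsolated {α : Type*} (H : SimpleGraph α) : ℕ :=
  Nat.card {w : α | ∀ u : α, ¬ H.Adj w u}

lemma numIsolated_induce_compl {V : Type*} [Fintype V] [DecidableEq V]
    (G : SimpleGraph V) [DecidableRel G.Adj] (S : Finset V) :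
    numIsolated ((G.induce (S : Set V))ᶜ) =
      (S.filter (fun v => ∀ u ∈ S, u ≠ v → G.Adj v u)).card := by
  classical
  rw [numIsolated, Nat.card_eq_fintype_card, Fintype.card_subtype]
  refine Finset.card_nbij (fun w => (w : V)) ?_ ?_ ?_
  · intro w hw
    simp only [mem_filter, mem_univ, true_and, Set.mem_setOf_eq] at hw ⊢
    refine Finset.mem_filter.mpr ⟨w.2, fun u hu hne => ?_⟩
    have h := (Finset.mem_filter.mp (Finset.mem_coe.mp hw)).2 ⟨u, hu⟩
    simp only [SimpleGraph.compl_adj, not_and, not_not] at h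
    rcases eq_or_ne w (⟨u, hu⟩ : (S : Set V)) with he | hne'
    · exact absurd (congrArg Subtype.val he).symm hne
    · have := h hne'
      simpa [SimpleGraph.comap_adj] using this
  · intro w _ w' _ h
    exact Subtype.ext h
  · intro v hv
    simp only [Finset.coe_filter, Set.mem_setOf_eq] at hv
    obtain ⟨hvS, hadj⟩ := hv
    refine ⟨⟨v, hvS⟩, ?_, rfl⟩
    simp only [Finset.mem_coe, mem_filter, mem_univ, true_and, Set.mem_setOf_eq]
    intro u
    simp only [SimpleGraph.compl_adj, not_and, not_not]
    intro hne
    have huv : (u : V) ≠ v := fun h => hne (Subtype.ext h.symm)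
    have := hadj u u.2 huv
    simpa [SimpleGraph.comap_adj] using this

theorem sum_isolated_complement
    {V : Type*} [Fintype V] [DecidableEq V] (G : SimpleGraph V) [DecidableRel G.Adj]
    (i : ℕ) :
    ∑ S ∈ (Finset.univ : Finset V).powersetCard (i + 2),
        numIsolated ((G.induce (S : Set V))ᶜ) =
      ∑ v : V, (G.degree v).choose (i + 1) := by
  classical
  simp_rw [numIsolated_induce_compl]
  have h1 : ∀ S : Finset V, (S.filter (fun v => ∀ u ∈ S, u ≠ v → G.Adj v u)).card
      = ∑ v : V, if v ∈ S ∧ ∀ u ∈ S, u ≠ v → G.Adj v u then 1 else 0 := by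
    intro S
    rw [Finset.card_filter]
    rw [Finset.sum_congr rfl (fun v (_ : v ∈ (univ : Finset V)) => ite_and (v ∈ S)
      (∀ u ∈ S, u ≠ v → G.Adj v u) 1 0)]
    rw [Finset.sum_ite_mem, Finset.univ_inter]
  simp_rw [h1]
  rw [Finset.sum_comm]
  apply Finset.sum_congr rfl
  intro v _
  rw [← Finset.card_filter]
  rw [← SimpleGraph.card_neighborFinset_eq_degree, ← Finset.card_powersetCard]
  refine Finset.card_nbij (fun S => S.erase v) ?_ ?_ ?_
  · intro S hS
    simp only [mem_filter, Finset.mem_powersetCard] at hS ⊢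
    obtain ⟨hS1, hvS, hadj⟩ := Finset.mem_filter.mp hS
    obtain ⟨_, hcard⟩ := Finset.mem_powersetCard.mp hS1
    refine Finset.mem_powersetCard.mpr ⟨fun u hu => ?_, ?_⟩
    · rw [Finset.mem_erase] at hu
      rw [SimpleGraph.mem_neighborFinset]
      exact hadj u hu.2 hu.1
    · rw [Finset.card_erase_of_mem hvS, hcard]
      omega
  · intro S hS S' hS' h
    simp only [Finset.mem_coe, mem_filter] at hS hS'
    have h2 : insert v (S.erase v) = insert v (S'.erase v) := by
      simp only at h; rw [h]
    rwa [Finset.insert_erase hS.2.1, Finset.insert_erase hS'.2.1] at h2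
  · intro T hT
    simp only [Finset.mem_coe, Finset.mem_powersetCard] at hT
    obtain ⟨hTsub, hTcard⟩ := hT
    have hvT : v ∉ T := fun h =>
      G.irrefl ((SimpleGraph.mem_neighborFinset G v v).mp (hTsub h))
    refine ⟨insert v T, ?_, ?_⟩
    · simp only [Finset.coe_filter, Set.mem_setOf_eq, Finset.mem_powersetCard]
      refine ⟨⟨Finset.subset_univ _, by rw [Finset.card_insert_of_notMem hvT, hTcard]⟩,
        Finset.mem_insert_self v T, fun u hu hne => ?_⟩
      rcases Finset.mem_insert.mp hu with h | h
      · exact absurd h hne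
      · exact (SimpleGraph.mem_neighborFinset G v u).mp (hTsub h)
    · exact Finset.erase_insert hvT
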